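/- arXiv:1702.06422 — 2 statements merged into one kernel-verified Lean document; each statement's English description precedes it below -/
import Mathlib

section
/- For n ≥ 1 and p ≥ 0, ∫_{0}^{1} B_{n,p}(t) dt = -p·B_{n,p}/(n+1). -/
def pBernoulli : ℕ → ℕ → ℚ
  | 0, _ => 1
  | n + 1, p => p * pBernoulli n p - ((p + 1 : ℚ) ^ 2 / (p + 2)) * pBernoulli n (p + 1)

lemma pBernoulli_succ (n p : ℕ) : pBernoulli (n+1) p
    = p * pBernoulli n p - ((p + 1 : ℚ) ^ 2 / (p + 2)) * pBernoulli n (p + 1) := rfl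

lemma key : ∀ n, 1 ≤ n → ∀ p : ℕ,
    ∑ k ∈ Finset.range (n+1), ((n+1).choose k : ℚ) * pBernoulli k p
      = -(p:ℚ) * pBernoulli n p := by
  intro n hn
  induction n, hn using Nat.le_induction with
  | base =>
    intro p
    have h2 : (p:ℚ) + 2 ≠ 0 := by positivity
    have h3 : (p:ℚ) + 3 ≠ 0 := by positivity
    simp [Finset.sum_range_succ, pBernoulli]
    push_cast
    field_simp
    ring
  | succ n hn ih =>
    intro p
    set c : ℚ := ((p:ℚ) + 1) ^ 2 / ((p:ℚ) + 2) with hc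
    rw [Finset.sum_range_succ']
    have step1 : ∀ j, ((n+2).choose (j+1) : ℚ) * pBernoulli (j+1) p
        = ((n+1).choose j : ℚ) * ((p:ℚ) * pBernoulli j p - c * pBernoulli j (p+1))
          + ((n+1).choose (j+1) : ℚ) * pBernoulli (j+1) p := by
      intro j
      rw [Nat.choose_succ_succ, pBernoulli_succ]
      push_cast
      ring
    simp only [step1]
    rw [Finset.sum_add_distrib]
    have sum1 : ∑ j ∈ Finset.range (n+1),
        ((n+1).choose j : ℚ) * ((p:ℚ) * pBernoulli j p - c * pBernoulli j (p+1))
        = (p:ℚ) * (-(p:ℚ) * pBernoulli n p) - c * (-((p:ℚ)+1) * pBernoulli n (p+1)) := by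
      simp only [mul_sub]
      rw [Finset.sum_sub_distrib]
      have e1 : ∑ j ∈ Finset.range (n+1), ((n+1).choose j : ℚ) * ((p:ℚ) * pBernoulli j p)
          = (p:ℚ) * ∑ j ∈ Finset.range (n+1), ((n+1).choose j : ℚ) * pBernoulli j p := by
        rw [Finset.mul_sum]; exact Finset.sum_congr rfl (fun j _ => by ring)
      have e2 : ∑ j ∈ Finset.range (n+1), ((n+1).choose j : ℚ) * (c * pBernoulli j (p+1))
          = c * ∑ j ∈ Finset.range (n+1), ((n+1).choose j : ℚ) * pBernoulli j (p+1) := by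
        rw [Finset.mul_sum]; exact Finset.sum_congr rfl (fun j _ => by ring)
      rw [e1, e2, ih p, ih (p+1)]
      push_cast
      ring
    have sum2 : ∑ j ∈ Finset.range (n+1), ((n+1).choose (j+1) : ℚ) * pBernoulli (j+1) p
        = (-(p:ℚ) * pBernoulli n p + pBernoulli (n+1) p) - 1 := by
      have := Finset.sum_range_succ' (fun k => ((n+1).choose k : ℚ) * pBernoulli k p) (n+1)
      rw [Finset.sum_range_succ, ih p] at this
      simp [pBernoulli] at this ⊢
      linarith [this]
    rw [sum1, sum2]
    have h2 : (p:ℚ) + 2 ≠ 0 := by positivity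
    simp only [pBernoulli_succ, hc, Nat.choose_zero_right, Nat.cast_one, one_mul]
    show _ = _
    simp only [pBernoulli]
    push_cast
    field_simp
    ring

lemma key2 (n p : ℕ) (hn : 1 ≤ n) :
    ∑ k ∈ Finset.range (n+1), (n.choose k : ℚ) * pBernoulli k p / ((n - k : ℕ) + 1)
      = -(p:ℚ) * pBernoulli n p / (n + 1) := by
  have hkey := key n hn p
  have hn1 : ((n:ℚ) + 1) ≠ 0 := by positivity
  rw [eq_div_iff hn1, ← hkey, Finset.sum_mul]
  refine Finset.sum_congr rfl (fun k hk => ?_)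
  have hk' : k ≤ n := Nat.lt_succ_iff.mp (Finset.mem_range.mp hk)
  have hd : ((n - k : ℕ) : ℚ) + 1 ≠ 0 := by positivity
  have h2 : n + 1 - k = n - k + 1 := by omega
  have hcast : (n.choose k : ℚ) * ((n:ℚ)+1) = ((n+1).choose k : ℚ) * (((n-k:ℕ):ℚ)+1) := by
    have := Nat.choose_mul_succ_eq n k
    rw [h2] at this
    exact_mod_cast this
  rw [div_mul_eq_mul_div, div_eq_iff hd]
  linear_combination pBernoulli k p * hcast

/-- The p-Bernoulli polynomials `B_{n,p}(x) = ∑ C(n,k) x^{n-k} B_{k,p}`. -/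
def pBernoulliPoly (n p : ℕ) (x : ℝ) : ℝ :=
  ∑ k ∈ Finset.range (n + 1), (n.choose k : ℝ) * x ^ (n - k) * (pBernoulli k p : ℝ)

theorem integral_pBernoulliPoly (n p : ℕ) (hn : 1 ≤ n) :
    ∫ t in (0 : ℝ)..1, pBernoulliPoly n p t = -(p : ℝ) * (pBernoulli n p : ℝ) / (n + 1) := by
  unfold pBernoulliPoly
  rw [intervalIntegral.integral_finset_sum (f := fun k (t : ℝ) => (n.choose k : ℝ) * t ^ (n - k) * (pBernoulli k p : ℝ)) (fun k _ =>
    ((continuous_const.mul (continuous_pow (n - k))).mul continuous_const).intervalIntegrable 0 1)]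
  have hint : ∀ k, (∫ t in (0:ℝ)..1, (n.choose k : ℝ) * t ^ (n - k) * (pBernoulli k p : ℝ))
      = (n.choose k : ℝ) * (pBernoulli k p : ℝ) / (((n - k : ℕ) : ℝ) + 1) := by
    intro k
    have heq : (fun t : ℝ => (n.choose k : ℝ) * t ^ (n - k) * (pBernoulli k p : ℝ))
        = fun t : ℝ => ((n.choose k : ℝ) * (pBernoulli k p : ℝ)) * t ^ (n - k) := by
      funext t; ring
    rw [heq, intervalIntegral.integral_const_mul, integral_pow]
    norm_num
    ring
  simp only [hint]
  have hq := key2 n p hn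
  have hqR : ((∑ k ∈ Finset.range (n+1), (n.choose k : ℚ) * pBernoulli k p / ((n - k : ℕ) + 1) : ℚ) : ℝ)
      = ((-(p:ℚ) * pBernoulli n p / (n + 1) : ℚ) : ℝ) := by exact_mod_cast hq
  push_cast at hqR
  convert hqR using 2
end

section
/- For n ≥ 1 and p ≥ 1, the p-Bernoulli polynomials have a Raabe-type source identity: m^{n-1} · ∑_{k=0}^{m-1} w_{n-1}(x + k/m; y) · (n·y) = ∑_{k=1}^{n} C(n,k) · m^k · B_{n-k}(mx) · w_k(y), for all m ≥ 1, as an identity of polynomials in x and y. -/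
def stirling2 : ℕ → ℕ → ℕ
  | 0, 0 => 1
  | 0, _ + 1 => 0
  | _ + 1, 0 => 0
  | n + 1, k + 1 => (k + 1) * stirling2 n (k + 1) + stirling2 n k

lemma stirling2_eq_zero : ∀ n k, n < k → stirling2 n k = 0
  | 0, _ + 1, _ => rfl
  | n + 1, k + 1, h => by
    have h1 : n < k + 1 := by omega
    have h2 : n < k := by omega
    simp [stirling2, stirling2_eq_zero n (k+1) h1, stirling2_eq_zero n k h2]

lemma stirling2_key : ∀ n, 1 ≤ n → ∀ k,
    (k + 1) * stirling2 n (k + 1) = ∑ i ∈ Finset.range n, n.choose i * stirling2 i k := by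
  intro n
  induction n with
  | zero => omega
  | succ n ih =>
    intro _ k
    have expand : ∑ i ∈ Finset.range (n+1), (n+1).choose i * stirling2 i k
        = (∑ i ∈ Finset.range n, n.choose i * stirling2 (i+1) k)
          + ((∑ i ∈ Finset.range n, n.choose i * stirling2 i k)
             + stirling2 n k) := by
      rw [Finset.sum_range_succ' (fun i => (n+1).choose i * stirling2 i k) n]
      simp only [Nat.choose_succ_succ, Nat.add_mul, Finset.sum_add_distrib,
        Nat.succ_eq_add_one, Nat.choose_zero_right, one_mul]
      have h2 : (∑ i ∈ Finset.range n, n.choose (i+1) * stirling2 (i+1) k)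
            + n.choose 0 * stirling2 0 k
          = (∑ i ∈ Finset.range n, n.choose i * stirling2 i k)
            + n.choose n * stirling2 n k := by
        rw [← Finset.sum_range_succ' (fun i => n.choose i * stirling2 i k) n,
          Finset.sum_range_succ]
      simp only [Nat.choose_zero_right, one_mul, Nat.choose_self] at h2
      omega
    rcases Nat.eq_zero_or_pos n with hn | hn
    · subst hn
      cases k with
      | zero => simp [stirling2]
      | succ k => simp [stirling2, stirling2_eq_zero 0 (k+1) (by omega),
          stirling2_eq_zero 0 (k+2) (by omega)]
    · rw [expand]
      cases k with
      | zero =>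
        have hz0 : ∑ i ∈ Finset.range n, n.choose i * stirling2 (i+1) 0 = 0 := by
          have : ∀ i, stirling2 (i+1) 0 = 0 := fun i => rfl
          simp [this]
        have hS : stirling2 (n+1) (0+1) = (0+1) * stirling2 n (0+1) + stirling2 n 0 := rfl
        rw [hz0, ← ih hn 0, hS]
        ring
      | succ k =>
        have hstep : ∀ i, stirling2 (i+1) (k+1)
            = (k+1) * stirling2 i (k+1) + stirling2 i k := fun i => rfl
        have e1 : ∑ i ∈ Finset.range n, n.choose i * stirling2 (i+1) (k+1)
            = (k+1) * (∑ i ∈ Finset.range n, n.choose i * stirling2 i (k+1))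
              + ∑ i ∈ Finset.range n, n.choose i * stirling2 i k := by
          simp only [hstep, Nat.mul_add, Finset.sum_add_distrib, Finset.mul_sum]
          congr 1
          apply Finset.sum_congr rfl; intro i _; ring
        have hS : stirling2 (n+1) (k+1+1)
            = (k+1+1) * stirling2 n (k+1+1) + stirling2 n (k+1) := rfl
        rw [e1, ← ih hn (k+1), ← ih hn k, hS]
        ring

def geomPoly (n : ℕ) (y : ℝ) : ℝ :=
  ∑ k ∈ Finset.range (n + 1), (stirling2 n k : ℝ) * (Nat.factorial k : ℝ) * y ^ k

lemma geomPoly_eq_sum_range (i N : ℕ) (h : i < N) (y : ℝ) :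
    geomPoly i y = ∑ k ∈ Finset.range N, (stirling2 i k : ℝ) * (Nat.factorial k : ℝ) * y ^ k := by
  unfold geomPoly
  apply Finset.sum_subset
  · intro a ha
    simp only [Finset.mem_range] at *
    omega
  · intro a _ ha
    simp only [Finset.mem_range, not_lt] at ha
    rw [stirling2_eq_zero i a (by omega)]
    simp

lemma geomPoly_rec (n : ℕ) (hn : 1 ≤ n) (y : ℝ) :
    geomPoly n y = y * ∑ i ∈ Finset.range n, (n.choose i : ℝ) * geomPoly i y := by
  unfold geomPoly
  rw [Finset.sum_range_succ' (fun k => (stirling2 n k : ℝ) * (Nat.factorial k : ℝ) * y ^ k) n]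
  have h0 : stirling2 n 0 = 0 := by
    obtain ⟨m, rfl⟩ := Nat.exists_eq_add_of_le' hn
    rfl
  rw [h0]
  simp only [Nat.cast_zero, zero_mul, pow_zero, mul_one, add_zero]
  have hterm : ∀ k, (stirling2 n (k+1) : ℝ) * (Nat.factorial (k+1) : ℝ) * y ^ (k+1)
      = y * ∑ i ∈ Finset.range n, (n.choose i : ℝ) *
          ((stirling2 i k : ℝ) * (Nat.factorial k : ℝ) * y ^ k) := by
    intro k
    have hkey : ((k+1) * stirling2 n (k+1) : ℝ)
        = ∑ i ∈ Finset.range n, ((n.choose i : ℝ) * (stirling2 i k : ℝ)) := by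
      have := stirling2_key n hn k
      calc ((k:ℝ)+1) * (stirling2 n (k+1) : ℝ) = (((k+1) * stirling2 n (k+1) : ℕ) : ℝ) := by
            push_cast; ring
        _ = _ := by rw [this]; push_cast; rfl
    have hfac : (Nat.factorial (k+1) : ℝ) = (k+1) * Nat.factorial k := by
      push_cast [Nat.factorial_succ]; ring
    rw [hfac, pow_succ]
    rw [Finset.sum_congr rfl (fun i _ => by ring :
      ∀ i ∈ Finset.range n, (n.choose i : ℝ) * ((stirling2 i k : ℝ) * (Nat.factorial k : ℝ) * y ^ k)
        = ((n.choose i : ℝ) * (stirling2 i k : ℝ)) * ((Nat.factorial k : ℝ) * y ^ k))]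
    rw [← Finset.sum_mul, ← hkey]
    ring
  rw [Finset.sum_congr rfl (fun k _ => hterm k)]
  rw [← Finset.mul_sum, Finset.sum_comm]
  congr 1
  apply Finset.sum_congr rfl
  intro i hi
  rw [← Finset.mul_sum, ← geomPoly_eq_sum_range i n (Finset.mem_range.mp hi)]
  simp [geomPoly]

noncomputable def bernoulliPolyR (n : ℕ) (x : ℝ) : ℝ :=
  Polynomial.eval x ((Polynomial.bernoulli n).map (algebraMap ℚ ℝ))

lemma bernoulliPolyR_def (s : ℕ) (t : ℝ) :
    bernoulliPolyR s t = ∑ i ∈ Finset.range (s+1),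
      ((_root_.bernoulli i : ℚ) : ℝ) * (s.choose i : ℝ) * t ^ (s - i) := by
  unfold bernoulliPolyR
  rw [Polynomial.bernoulli, Polynomial.map_sum, Polynomial.eval_finset_sum]
  apply Finset.sum_congr rfl
  intro i _
  rw [Polynomial.map_monomial, Polynomial.eval_monomial, eq_ratCast (algebraMap ℚ ℝ)]
  push_cast
  ring

lemma bernoulliPolyR_add_one (n : ℕ) (x : ℝ) :
    bernoulliPolyR n (x + 1) = bernoulliPolyR n x + n * x ^ (n - 1) := by
  have hpoly : (Polynomial.bernoulli n).comp (Polynomial.X + Polynomial.C 1)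
      = Polynomial.bernoulli n + Polynomial.C (n : ℚ) * Polynomial.X ^ (n - 1) := by
    apply Polynomial.funext
    intro r
    rw [Polynomial.eval_comp]
    simp [Polynomial.bernoulli_eval_one_add, add_comm r 1]
  have := congrArg (fun p : Polynomial ℚ =>
    Polynomial.eval x (p.map (algebraMap ℚ ℝ))) hpoly
  simp only [Polynomial.map_comp, Polynomial.eval_comp, Polynomial.map_add, Polynomial.map_mul,
    Polynomial.map_pow, Polynomial.map_X, Polynomial.map_C, Polynomial.eval_add,
    Polynomial.eval_mul, Polynomial.eval_pow, Polynomial.eval_X, Polynomial.eval_C,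
    Polynomial.map_one, Polynomial.eval_one, map_one, map_natCast, Polynomial.map_natCast, Polynomial.eval_natCast] at this
  unfold bernoulliPolyR
  rw [← this]

lemma choose_trinom {s i r : ℕ} (h : i + r ≤ s) :
    s.choose i * (s - i).choose r = s.choose r * (s - r).choose i := by
  have h1 := Nat.choose_mul (n := s) (k := i + r) (s := i) (Nat.le_add_right i r)
  have h2 := Nat.choose_mul (n := s) (k := i + r) (s := r) (Nat.le_add_left r i)
  have h3 : (i + r).choose i = (i + r).choose r := by
    rw [← Nat.choose_symm (Nat.le_add_right i r)]
    congr 1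
    omega
  rw [Nat.add_sub_cancel] at h2
  rw [Nat.add_sub_cancel_left] at h1
  rw [h3] at h1
  exact h1.symm.trans h2

lemma bernoulliPolyR_add (s : ℕ) (t u : ℝ) :
    bernoulliPolyR s (t + u)
      = ∑ r ∈ Finset.range (s+1), (s.choose r : ℝ) * u ^ r * bernoulliPolyR (s-r) t := by
  rw [bernoulliPolyR_def]
  have expand : ∀ i ∈ Finset.range (s+1),
      ((_root_.bernoulli i : ℚ) : ℝ) * (s.choose i : ℝ) * (t + u) ^ (s - i)
      = ∑ r ∈ Finset.range (s - i + 1),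
          ((_root_.bernoulli i : ℚ) : ℝ) * (s.choose i : ℝ) * ((s-i).choose r : ℝ)
            * u ^ r * t ^ (s - i - r) := by
    intro i _
    rw [add_comm t u, add_pow, Finset.mul_sum]
    apply Finset.sum_congr rfl
    intro r _
    ring
  rw [Finset.sum_congr rfl expand]
  have expand2 : ∀ r ∈ Finset.range (s+1),
      (s.choose r : ℝ) * u ^ r * bernoulliPolyR (s-r) t
      = ∑ i ∈ Finset.range (s - r + 1),
          ((_root_.bernoulli i : ℚ) : ℝ) * (s.choose r : ℝ) * ((s-r).choose i : ℝ)
            * u ^ r * t ^ (s - r - i) := by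
    intro r _
    rw [bernoulliPolyR_def, Finset.mul_sum]
    apply Finset.sum_congr rfl
    intro i _
    ring
  rw [Finset.sum_congr rfl expand2]
  rw [Finset.sum_sigma', Finset.sum_sigma']
  apply Finset.sum_nbij' (fun x => ⟨x.2, x.1⟩) (fun x => ⟨x.2, x.1⟩)
  · rintro ⟨i, r⟩ hm
    simp only [Finset.mem_sigma, Finset.mem_range] at *
    omega
  · rintro ⟨r, i⟩ hm
    simp only [Finset.mem_sigma, Finset.mem_range] at *
    omega
  · rintro ⟨i, r⟩ _; rfl
  · rintro ⟨r, i⟩ _; rfl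
  · rintro ⟨i, r⟩ hm
    simp only [Finset.mem_sigma, Finset.mem_range] at hm
    have hir : i + r ≤ s := by omega
    have hc : (s.choose i : ℝ) * ((s-i).choose r : ℝ)
        = (s.choose r : ℝ) * ((s-r).choose i : ℝ) := by
      have := choose_trinom hir
      exact_mod_cast congrArg (fun x : ℕ => (x : ℝ)) this
    have he : s - i - r = s - r - i := by omega
    simp only []
    rw [he]
    calc ((_root_.bernoulli i : ℚ) : ℝ) * (s.choose i : ℝ) * ((s-i).choose r : ℝ) * u ^ r * t ^ (s - r - i)
        = ((_root_.bernoulli i : ℚ) : ℝ) * ((s.choose i : ℝ) * ((s-i).choose r : ℝ)) * u ^ r * t ^ (s - r - i) := by ring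
      _ = ((_root_.bernoulli i : ℚ) : ℝ) * ((s.choose r : ℝ) * ((s-r).choose i : ℝ)) * u ^ r * t ^ (s - r - i) := by rw [hc]
      _ = ((_root_.bernoulli i : ℚ) : ℝ) * (s.choose r : ℝ) * ((s-r).choose i : ℝ) * u ^ r * t ^ (s - r - i) := by ring

lemma range_succ_eq_insert_Icc (s : ℕ) : Finset.range (s+1) = insert 0 (Finset.Icc 1 s) := by
  ext a
  simp only [Finset.mem_range, Finset.mem_insert, Finset.mem_Icc]
  omega

lemma bernoulli_telescope (s : ℕ) (hs : 1 ≤ s) (m : ℕ) (t : ℝ) :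
    (s : ℝ) * ∑ k ∈ Finset.range m, (t + k) ^ (s-1)
      = ∑ r ∈ Finset.Icc 1 s, (s.choose r : ℝ) * (m:ℝ) ^ r * bernoulliPolyR (s-r) t := by
  have tele := Finset.sum_range_sub (fun k : ℕ => bernoulliPolyR s (t + k)) m
  have step : ∀ k : ℕ, bernoulliPolyR s (t + (((k+1):ℕ):ℝ)) - bernoulliPolyR s (t + k)
      = (s:ℝ) * (t + k) ^ (s-1) := by
    intro k
    have := bernoulliPolyR_add_one s (t + k)
    rw [show t + (((k+1):ℕ):ℝ) = t + k + 1 by push_cast; ring, this]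
    ring
  rw [Finset.sum_congr rfl (fun k _ => step k)] at tele
  rw [Finset.mul_sum, tele]
  have hadd := bernoulliPolyR_add s t (m : ℝ)
  rw [range_succ_eq_insert_Icc s, Finset.sum_insert (by simp)] at hadd
  have h0 : (s.choose 0 : ℝ) * (m:ℝ) ^ 0 * bernoulliPolyR (s-0) t = bernoulliPolyR s t := by
    simp
  rw [h0] at hadd
  push_cast
  rw [hadd, show t + (0:ℝ) = t by ring]
  ring

def geomPoly2 (n : ℕ) (x y : ℝ) : ℝ :=
  ∑ k ∈ Finset.range (n + 1), (n.choose k : ℝ) * geomPoly k y * x ^ (n - k)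

theorem geomPoly2_raabe (n p : ℕ) (hn : 1 ≤ n) (hp : 1 ≤ p) (m : ℕ) (hm : 1 ≤ m)
    (x y : ℝ) :
    (m : ℝ) ^ (n - 1) * ∑ k ∈ Finset.range m, geomPoly2 (n - 1) (x + k / m) y * (n * y)
      = ∑ k ∈ Finset.Icc 1 n,
          (n.choose k : ℝ) * (m : ℝ) ^ k * bernoulliPolyR (n - k) (m * x) * geomPoly k y := by
  obtain ⟨N, rfl⟩ : ∃ N, n = N + 1 := ⟨n - 1, by omega⟩
  simp only [Nat.add_sub_cancel]
  have hm0 : (m : ℝ) ≠ 0 := by positivity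
  -- LHS transformation
  have stepA : (m : ℝ) ^ N * ∑ k ∈ Finset.range m, geomPoly2 N (x + k / m) y * ((N+1 : ℕ) * y)
      = ∑ k ∈ Finset.range m, ∑ j ∈ Finset.range (N+1),
          (((N+1:ℕ) : ℝ) * (N.choose j : ℝ)) * geomPoly j y * y
            * ((m:ℝ)^j * ((m:ℝ) * x + k) ^ (N - j)) := by
    rw [Finset.mul_sum]
    apply Finset.sum_congr rfl
    intro k _
    unfold geomPoly2
    rw [Finset.sum_mul, Finset.mul_sum]
    apply Finset.sum_congr rfl
    intro j hj
    have hj' : j ≤ N := by simpa [Nat.lt_succ_iff] using hj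
    have hmxk : (m:ℝ)^N * (x + k/m)^(N-j) = (m:ℝ)^j * ((m:ℝ)*x + k)^(N-j) := by
      have h1 : (m:ℝ) * (x + k/m) = (m:ℝ)*x + k := by field_simp
      calc (m:ℝ)^N * (x + k/m)^(N-j)
          = (m:ℝ)^j * ((m:ℝ)^(N-j) * (x + k/m)^(N-j)) := by
            rw [← mul_assoc, ← pow_add]
            congr 2
            omega
        _ = (m:ℝ)^j * (((m:ℝ) * (x + k/m))^(N-j)) := by rw [mul_pow]
        _ = _ := by rw [h1]
    linear_combination ((N.choose j : ℝ) * geomPoly j y * (((N+1:ℕ):ℝ) * y)) * hmxk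
  have stepC : ∀ j ∈ Finset.range (N+1),
      ∑ k ∈ Finset.range m, (((N+1:ℕ) : ℝ) * (N.choose j : ℝ)) * geomPoly j y * y
          * ((m:ℝ)^j * ((m:ℝ) * x + k) ^ (N - j))
      = ∑ r ∈ Finset.Icc 1 (N+1-j),
          y * (((N+1).choose j : ℝ)) * geomPoly j y * (m:ℝ)^j
            * (((N+1-j).choose r : ℝ) * (m:ℝ)^r * bernoulliPolyR (N+1-j-r) ((m:ℝ)*x)) := by
    intro j hj
    have hj' : j ≤ N := by simpa [Nat.lt_succ_iff] using hj
    have hs : 1 ≤ N+1-j := by omega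
    have tel := bernoulli_telescope (N+1-j) hs m ((m:ℝ)*x)
    rw [show N+1-j-1 = N-j by omega] at tel
    have hnat : (N+1) * N.choose j = (N+1-j) * (N+1).choose j := by
      have h1 := Nat.add_one_mul_choose_eq N j
      have h2 := Nat.choose_succ_right_eq (N+1) j
      calc (N+1) * N.choose j = (N+1).choose (j+1) * (j+1) := h1
        _ = (N+1).choose j * (N+1-j) := h2
        _ = (N+1-j) * (N+1).choose j := Nat.mul_comm _ _
    have hch : ((N+1:ℕ) : ℝ) * (N.choose j : ℝ) = ((N+1-j : ℕ):ℝ) * ((N+1).choose j : ℝ) := by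
      exact_mod_cast congrArg (fun a : ℕ => (a : ℝ)) hnat
    calc ∑ k ∈ Finset.range m, (((N+1:ℕ) : ℝ) * (N.choose j : ℝ)) * geomPoly j y * y
          * ((m:ℝ)^j * ((m:ℝ) * x + k) ^ (N - j))
        = ∑ k ∈ Finset.range m, (((N+1).choose j : ℝ) * geomPoly j y * y * (m:ℝ)^j)
            * (((N+1-j:ℕ):ℝ) * ((m:ℝ) * x + k) ^ (N - j)) := by
          apply Finset.sum_congr rfl
          intro k _
          linear_combination (geomPoly j y * y * ((m:ℝ)^j * ((m:ℝ) * x + k) ^ (N - j))) * hch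
      _ = (((N+1).choose j : ℝ) * geomPoly j y * y * (m:ℝ)^j)
            * (((N+1-j:ℕ):ℝ) * ∑ k ∈ Finset.range m, ((m:ℝ) * x + k) ^ (N - j)) := by
          simp only [Finset.mul_sum]
      _ = (((N+1).choose j : ℝ) * geomPoly j y * y * (m:ℝ)^j)
            * (∑ r ∈ Finset.Icc 1 (N+1-j),
                ((N+1-j).choose r : ℝ) * (m:ℝ)^r * bernoulliPolyR (N+1-j-r) ((m:ℝ)*x)) := by
          rw [tel]
      _ = _ := by
          rw [Finset.mul_sum]
          apply Finset.sum_congr rfl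
          intro r _
          ring
  rw [stepA, Finset.sum_comm, Finset.sum_congr rfl stepC]
  -- RHS transformation
  have rhs_eq : ∑ k ∈ Finset.Icc 1 (N+1),
        ((N+1).choose k : ℝ) * (m : ℝ) ^ k * bernoulliPolyR (N+1 - k) ((m:ℝ) * x) * geomPoly k y
      = ∑ k ∈ Finset.Icc 1 (N+1), ∑ i ∈ Finset.range k,
          ((N+1).choose k : ℝ) * (m : ℝ) ^ k * bernoulliPolyR (N+1 - k) ((m:ℝ) * x)
            * (y * ((k.choose i : ℝ) * geomPoly i y)) := by
    apply Finset.sum_congr rfl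
    intro k hk
    have hk1 : 1 ≤ k := (Finset.mem_Icc.mp hk).1
    rw [geomPoly_rec k hk1 y]
    simp only [Finset.mul_sum]
  rw [rhs_eq]
  -- reindex via sigma types
  rw [Finset.sum_sigma', Finset.sum_sigma']
  apply Finset.sum_nbij' (fun a => (⟨a.1 + a.2, a.1⟩ : Σ _ : ℕ, ℕ))
    (fun a => (⟨a.2, a.1 - a.2⟩ : Σ _ : ℕ, ℕ))
  · rintro ⟨j, r⟩ hm'
    simp only [Finset.mem_sigma, Finset.mem_range, Finset.mem_Icc] at *
    omega
  · rintro ⟨k, i⟩ hm'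
    simp only [Finset.mem_sigma, Finset.mem_range, Finset.mem_Icc] at *
    omega
  · rintro ⟨j, r⟩ hm'
    simp only [Finset.mem_sigma, Finset.mem_range, Finset.mem_Icc] at hm'
    simp only [Nat.add_sub_cancel_left]
  · rintro ⟨k, i⟩ hm'
    simp only [Finset.mem_sigma, Finset.mem_range, Finset.mem_Icc] at hm'
    have : i + (k - i) = k := by omega
    simp only [this]
  · rintro ⟨j, r⟩ hm'
    simp only [Finset.mem_sigma, Finset.mem_range, Finset.mem_Icc] at hm'
    obtain ⟨hj, hr1, hr2⟩ := hm'
    have hjr : j + r ≤ N + 1 := by omega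
    have hcn : (N+1).choose (j+r) * (j+r).choose j = (N+1).choose j * (N+1-j).choose r := by
      have := Nat.choose_mul (n := N+1) (k := j+r) (s := j) (Nat.le_add_right j r)
      rwa [Nat.add_sub_cancel_left] at this
    have hcnR : ((N+1).choose (j+r) : ℝ) * ((j+r).choose j : ℝ)
        = ((N+1).choose j : ℝ) * ((N+1-j).choose r : ℝ) := by exact_mod_cast hcn
    simp only []
    rw [show N+1-(j+r) = N+1-j-r by omega, pow_add]
    linear_combination (-((m:ℝ)^j * (m:ℝ)^r * bernoulliPolyR (N+1-j-r) ((m:ℝ)*x) * y * geomPoly j y)) * hcnR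
end
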